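/- Let Λ be a finitely generated free abelian group with an additive involution σ, and let Λ* = Hom_ℤ(Λ, ℤ) carry the induced involution (σ·f)(x) = f(σx). Then Λ* is isomorphic to Λ as a G-module, i.e. there is a group isomorphism Λ → Λ* commuting with the involutions. -/

import Mathlib

open Module

section Aux

variable {L : Type*} [AddCommGroup L]

/-- An equivariant isomorphism onto the dual. -/
def GSol (L : Type*) [AddCommGroup L] (σ : L →ₗ[ℤ] L) : Prop :=
  ∃ e : L ≃ₗ[ℤ] Module.Dual ℤ L, ∀ x y, e (σ x) y = e x (σ y)

def IsPrim (g : L) : Prop := ∀ (k : ℤ) (z : L), k • z = g → IsUnit k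

theorem prim_exists [Module.Free ℤ L] [Module.Finite ℤ L] {g : L} (hg : g ≠ 0) :
    ∃ (c : ℤ) (p : L), g = c • p ∧ IsPrim p := by
  classical
  let b := Module.Free.chooseBasis ℤ L
  set c : ℤ := Finset.gcd Finset.univ (fun i => b.repr g i) with hc
  have hcdvd : ∀ i, c ∣ b.repr g i := fun i => Finset.gcd_dvd (Finset.mem_univ i)
  have hc0 : c ≠ 0 := by
    intro h
    apply hg
    have h0 : ∀ i, b.repr g i = 0 := by
      intro i
      have := hcdvd i
      rw [h] at this
      exact zero_dvd_iff.mp this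
    apply b.repr.injective
    ext i
    simp [h0 i]
  set p : L := b.repr.symm ((b.repr g).mapRange (fun a => a / c) (by simp)) with hp
  have hrep : b.repr p = (b.repr g).mapRange (fun a => a / c) (by simp) :=
    b.repr.apply_symm_apply _
  refine ⟨c, p, ?_, ?_⟩
  · apply b.repr.injective
    rw [map_smul, hrep]
    ext i
    simp only [Finsupp.smul_apply, Finsupp.mapRange_apply, smul_eq_mul]
    exact (Int.mul_ediv_cancel' (hcdvd i)).symm
  · intro k z hz
    have hcoord : ∀ i, (k * c) ∣ b.repr g i := by
      intro i
      have h1 : b.repr g i = c * (b.repr g i / c) := (Int.mul_ediv_cancel' (hcdvd i)).symm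
      have h2 : b.repr p i = k * b.repr z i := by
        rw [← hz, map_smul]; simp
      have h3 : b.repr p i = b.repr g i / c := by rw [hrep]; simp [Finsupp.mapRange_apply]
      refine ⟨b.repr z i, ?_⟩
      rw [h1, ← h3, h2]; ring
    have hdc : (k * c) ∣ c := Finset.dvd_gcd (fun i _ => hcoord i)
    obtain ⟨e, he⟩ := hdc
    have : c * 1 = c * (k * e) := by nth_rewrite 1 [he]; ring
    exact IsUnit.of_mul_eq_one _ (mul_left_cancel₀ hc0 this).symm

theorem prim_div [Module.Free ℤ L] {p : L} (hp : IsPrim p) {k m : ℤ} {w : L}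
    (hk : k ≠ 0) (h : k • w = m • p) : ∃ m', m = k * m' ∧ w = m' • p := by
  classical
  let I : Submodule ℤ ℤ :=
    { carrier := {a : ℤ | ∃ z : L, k • z = a • p}
      add_mem' := by
        rintro a a' ⟨z, hz⟩ ⟨z', hz'⟩
        exact ⟨z + z', by rw [smul_add, hz, hz', add_smul]⟩
      zero_mem' := ⟨0, by simp⟩
      smul_mem' := by
        rintro r a ⟨z, hz⟩
        refine ⟨r • z, ?_⟩
        rw [smul_smul, mul_comm, ← smul_smul, hz, smul_smul, smul_eq_mul] }
  have hprin : Submodule.IsPrincipal I := inferInstance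
  obtain ⟨j, hj⟩ := hprin.principal
  have hkI : k ∈ I := ⟨p, rfl⟩
  have hmI : m ∈ I := ⟨w, h⟩
  rw [hj] at hkI hmI
  have hjk : j ∣ k := Ideal.mem_span_singleton.mp hkI
  have hjm : j ∣ m := Ideal.mem_span_singleton.mp hmI
  have hjI : j ∈ I := by rw [hj]; exact Submodule.mem_span_singleton_self j
  obtain ⟨zj, hzj⟩ := hjI
  have hj0 : j ≠ 0 := by rintro rfl; exact hk (by simpa using hjk)
  obtain ⟨k', hk'⟩ := hjk
  have hjj : j • (k' • zj) = j • p := by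
    rw [smul_smul, ← hk', hzj]
  have hk'p : k' • zj = p := smul_right_injective L hj0 (by simpa using hjj)
  have huk' : IsUnit k' := hp k' zj hk'p
  have hkdm : k ∣ m := by
    rcases Int.isUnit_iff.mp huk' with h1 | h1
    · rw [h1, mul_one] at hk'; rw [hk']; exact hjm
    · rw [h1] at hk'
      have : k = -j := by rw [hk']; ring
      rw [this]
      exact (neg_dvd).mpr hjm
  obtain ⟨m', hm'⟩ := hkdm
  refine ⟨m', hm', ?_⟩
  apply smul_right_injective L hk
  show k • w = k • (m' • p)
  rw [h, hm', mul_smul]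

end Aux
section Sols

variable {M : Type*} [AddCommGroup M]

theorem gsol_of_id [Module.Free ℤ M] [Module.Finite ℤ M] (σ : M →ₗ[ℤ] M)
    (h : ∀ x, σ x = x) : GSol M σ :=
  ⟨(Module.Free.chooseBasis ℤ M).toDualEquiv, fun x y => by rw [h x, h y]⟩

theorem gsol_of_neg [Module.Free ℤ M] [Module.Finite ℤ M] (σ : M →ₗ[ℤ] M)
    (h : ∀ x, σ x = -x) : GSol M σ :=
  ⟨(Module.Free.chooseBasis ℤ M).toDualEquiv, fun x y => by
    rw [h x, h y, map_neg]
    simp⟩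

theorem gsol_swap (b : Basis Bool ℤ M) (σ : M →ₗ[ℤ] M)
    (h0 : σ (b false) = b true) (h1 : σ (b true) = b false) : GSol M σ := by
  refine ⟨b.toDualEquiv, fun x y => ?_⟩
  have key : (b.toDualEquiv : M →ₗ[ℤ] Module.Dual ℤ M) ∘ₗ σ
      = σ.dualMap ∘ₗ (b.toDualEquiv : M →ₗ[ℤ] Module.Dual ℤ M) := by
    refine b.ext fun i => b.ext fun j => ?_
    cases i <;> cases j <;>
      simp [h0, h1, Basis.toDualEquiv_apply, Basis.toDual_apply]
  have := LinearMap.congr_fun key x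
  simp only [LinearMap.coe_comp, Function.comp_apply, LinearEquiv.coe_coe] at this
  rw [this]
  rfl

theorem gsol_combine {L : Type*} [AddCommGroup L] (σ : L →ₗ[ℤ] L)
    (S T : Submodule ℤ L) (hc : IsCompl S T)
    (hS : ∀ x ∈ S, σ x ∈ S) (hT : ∀ x ∈ T, σ x ∈ T)
    (sS : GSol S (σ.restrict hS)) (sT : GSol T (σ.restrict hT)) : GSol L σ := by
  obtain ⟨eS, heS⟩ := sS
  obtain ⟨eT, heT⟩ := sT
  let Φ : L ≃ₗ[ℤ] S × T := (Submodule.prodEquivOfIsCompl S T hc).symm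
  have hΦsymm : ∀ st : S × T, Φ.symm st = (st.1 : L) + (st.2 : L) := fun st => rfl
  have hΦσ : ∀ x : L, Φ (σ x) = (σ.restrict hS (Φ x).1, σ.restrict hT (Φ x).2) := by
    intro x
    have h1 : σ x = Φ.symm (σ.restrict hS (Φ x).1, σ.restrict hT (Φ x).2) := by
      rw [hΦsymm]
      have hx : x = ((Φ x).1 : L) + ((Φ x).2 : L) := by
        rw [← hΦsymm (Φ x), Φ.symm_apply_apply]
      calc σ x = σ (((Φ x).1 : L) + ((Φ x).2 : L)) := by rw [← hx]
        _ = σ ((Φ x).1 : L) + σ ((Φ x).2 : L) := map_add σ _ _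
        _ = _ := rfl
    rw [h1, Φ.apply_symm_apply]
  let E : L ≃ₗ[ℤ] Module.Dual ℤ L :=
    Φ.trans ((eS.prodCongr eT).trans ((Module.dualProdDualEquivDual ℤ S T).trans Φ.dualMap))
  have hE : ∀ x y : L, E x y = eS (Φ x).1 (Φ y).1 + eT (Φ x).2 (Φ y).2 := by
    intro x y
    show (Φ.dualMap ((Module.dualProdDualEquivDual ℤ S T)
      ((eS.prodCongr eT) (Φ x)))) y = _
    rw [LinearEquiv.dualMap_apply]
    simp [Module.dualProdDualEquivDual_apply, LinearEquiv.prodCongr_apply]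
  refine ⟨E, fun x y => ?_⟩
  rw [hE, hE, hΦσ x, hΦσ y]
  simp only [heS, heT]

end Sols
section Peel

theorem gsol_peel {L : Type*} [AddCommGroup L] [Module.Free ℤ L] [Module.Finite ℤ L]
    (σ : L →ₗ[ℤ] L) (hσ : ∀ x, σ (σ x) = x) (x : L)
    (hx : ∀ u v : L, σ u = u → σ v = -v → x ≠ u + v) :
    ∃ (S T : Submodule ℤ L) (_ : IsCompl S T)
      (hS : ∀ z ∈ S, σ z ∈ S) (_ : ∀ z ∈ T, σ z ∈ T) (b : Basis Bool ℤ S),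
      σ.restrict hS (b false) = b true ∧ σ.restrict hS (b true) = b false ∧
      Module.finrank ℤ T + 2 = Module.finrank ℤ L := by
  classical
  have hnu2 : ¬ IsUnit (2:ℤ) := by decide
  have cancel2 : ∀ z w : L, (2:ℤ) • z = (2:ℤ) • w → z = w := fun z w h =>
    smul_right_injective L two_ne_zero h
  obtain ⟨g, hgdef⟩ : ∃ w : L, w = x + σ x := ⟨_, rfl⟩
  obtain ⟨h, hhdef⟩ : ∃ w : L, w = x - σ x := ⟨_, rfl⟩
  have hσg : σ g = g := by rw [hgdef, map_add, hσ]; abel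
  have hσh : σ h = -h := by rw [hhdef, map_sub, hσ]; abel
  have hg0 : g ≠ 0 := by
    intro h0
    rw [hgdef] at h0
    exact hx 0 x (map_zero σ) (eq_neg_of_add_eq_zero_right h0) (by rw [zero_add])
  have hh0 : h ≠ 0 := by
    intro h0
    rw [hhdef] at h0
    have : σ x = x := (sub_eq_zero.mp h0).symm
    exact hx x 0 this (by simp) (by rw [add_zero])
  have hg2 : ∀ u : L, (2:ℤ) • u ≠ g := by
    intro u hu
    have hufix : σ u = u := by
      apply cancel2
      rw [← map_smul, hu, hσg]
    have hσx : σ x = u + u - x := by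
      have : x + σ x = u + u := by rw [← hgdef, ← hu, two_smul]
      rw [eq_sub_of_add_eq' this]
    have hv : σ (x - u) = -(x - u) := by rw [map_sub, hufix, hσx]; abel
    exact hx u (x - u) hufix hv (by abel)
  have hh2 : ∀ w : L, (2:ℤ) • w ≠ h := by
    intro w hw
    have hwneg : σ w = -w := by
      apply cancel2
      rw [← map_smul, hw, hσh, ← hw, smul_neg]
    have hσx : σ x = x - (w + w) := by
      have h1 : x - σ x = w + w := by rw [← hhdef, ← hw, two_smul]
      exact eq_sub_of_add_eq' (sub_eq_iff_eq_add.mp h1).symm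
    have hufix : σ (x - w) = x - w := by rw [map_sub, hwneg, hσx]; abel
    exact hx (x - w) w hufix hwneg (by abel)
  obtain ⟨α, g₀, hg₀, hgp⟩ := prim_exists hg0
  obtain ⟨β, h₀, hh₀, hhp⟩ := prim_exists hh0
  have hα0 : α ≠ 0 := by rintro rfl; rw [zero_smul] at hg₀; exact hg0 hg₀
  have hβ0 : β ≠ 0 := by rintro rfl; rw [zero_smul] at hh₀; exact hh0 hh₀
  have hg₀0 : g₀ ≠ 0 := by rintro rfl; rw [smul_zero] at hg₀; exact hg0 hg₀
  have hh₀0 : h₀ ≠ 0 := by rintro rfl; rw [smul_zero] at hh₀; exact hh0 hh₀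
  have hσg₀ : σ g₀ = g₀ := by
    apply smul_right_injective L hα0
    show α • σ g₀ = α • g₀
    rw [← map_smul, ← hg₀, hσg, hg₀]
  have hσh₀ : σ h₀ = -h₀ := by
    apply smul_right_injective L hβ0
    show β • σ h₀ = β • (-h₀)
    rw [← map_smul, ← hh₀, hσh, hh₀, smul_neg]
  have hαodd : ¬ (2 ∣ α) := by
    rintro ⟨t, ht⟩
    exact hg2 (t • g₀) (by rw [smul_smul, ← ht, ← hg₀])
  have hβodd : ¬ (2 ∣ β) := by
    rintro ⟨t, ht⟩
    exact hh2 (t • h₀) (by rw [smul_smul, ← ht, ← hh₀])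
  obtain ⟨x', hx'def⟩ : ∃ w : L, w = x - (((α - 1)/2) • g₀ + ((β - 1)/2) • h₀) := ⟨_, rfl⟩
  have e1 : (2:ℤ) • x = α • g₀ + β • h₀ := by
    rw [← hg₀, ← hh₀, hgdef, hhdef, two_smul]; abel
  have e2 : (2:ℤ) • (((α - 1)/2) • g₀) = (α - 1) • g₀ := by
    rw [smul_smul, Int.mul_ediv_cancel' (by omega : (2:ℤ) ∣ α - 1)]
  have e3 : (2:ℤ) • (((β - 1)/2) • h₀) = (β - 1) • h₀ := by
    rw [smul_smul, Int.mul_ediv_cancel' (by omega : (2:ℤ) ∣ β - 1)]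
  have hkey : (2:ℤ) • x' = g₀ + h₀ := by
    rw [hx'def, smul_sub, smul_add, e1, e2, e3, sub_smul, sub_smul, one_smul, one_smul]
    abel
  have hkeyσ : (2:ℤ) • σ x' = g₀ - h₀ := by
    rw [← map_smul, hkey, map_add, hσg₀, hσh₀]; abel
  have hsum : x' + σ x' = g₀ := by
    apply cancel2
    rw [smul_add, hkey, hkeyσ]; abel
  have hdiff : x' - σ x' = h₀ := by
    apply cancel2
    rw [smul_sub, hkey, hkeyσ]; abel
  set v : Bool → L := fun i => if i then σ x' else x' with hvdef
  have hvf : v false = x' := rfl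
  have hvt : v true = σ x' := rfl
  have hli : LinearIndependent ℤ v := by
    rw [Fintype.linearIndependent_iff]
    intro c hc
    have hsum0 : c false • x' + c true • σ x' = 0 := by
      rw [Fintype.sum_bool] at hc
      rw [add_comm]; exact hc
    have hσ0 : c false • σ x' + c true • x' = 0 := by
      have := congrArg σ hsum0
      rw [map_add, map_smul, map_smul, hσ, map_zero] at this
      exact this
    have hplus : (c false + c true) • g₀ = 0 := by
      have hexp : (c false + c true) • (x' + σ x')
          = (c false • x' + c true • σ x') + (c false • σ x' + c true • x') := by
        rw [add_smul, smul_add, smul_add]; abel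
      rw [← hsum, hexp, hsum0, hσ0, add_zero]
    have hminus : (c false - c true) • h₀ = 0 := by
      have hexp : (c false - c true) • (x' - σ x')
          = (c false • x' + c true • σ x') - (c false • σ x' + c true • x') := by
        rw [sub_smul, smul_sub, smul_sub]; abel
      rw [← hdiff, hexp, hsum0, hσ0, sub_zero]
    have h1 : c false + c true = 0 := by
      rcases smul_eq_zero.mp hplus with h' | h'
      · exact h'
      · exact absurd h' hg₀0
    have h2 : c false - c true = 0 := by
      rcases smul_eq_zero.mp hminus with h' | h'
      · exact h'
      · exact absurd h' hh₀0
    intro i; cases i <;> omega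
  set S : Submodule ℤ L := Submodule.span ℤ (Set.range v) with hSdef
  have hrange : Set.range v = {x', σ x'} := by
    ext w
    constructor
    · rintro ⟨i, rfl⟩
      cases i
      · exact Or.inl rfl
      · exact Or.inr rfl
    · rintro (rfl | rfl)
      · exact ⟨false, rfl⟩
      · exact ⟨true, rfl⟩
  have hSmem : ∀ z : L, z ∈ S ↔ ∃ a b : ℤ, a • x' + b • σ x' = z := by
    intro z
    rw [hSdef, hrange, Submodule.mem_span_pair]
  have hx'S : x' ∈ S := Submodule.subset_span ⟨false, rfl⟩
  have hσx'S : σ x' ∈ S := Submodule.subset_span ⟨true, rfl⟩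
  have hSinv : ∀ z ∈ S, σ z ∈ S := by
    intro z hz
    obtain ⟨a, b, hab⟩ := (hSmem z).mp hz
    rw [← hab, map_add, map_smul, map_smul, hσ]
    exact Submodule.add_mem _ (Submodule.smul_mem _ _ hσx'S) (Submodule.smul_mem _ _ hx'S)
  -- saturation
  have hsat : ∀ (k : ℤ) (y : L), k ≠ 0 → k • y ∈ S → y ∈ S := by
    intro k y hk hky
    obtain ⟨a, b, hab⟩ := (hSmem _).mp hky
    have hab' : a • σ x' + b • x' = k • σ y := by
      have := congrArg σ hab
      rw [map_add, map_smul, map_smul, hσ, map_smul] at this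
      exact this
    have hplus : k • (y + σ y) = (a + b) • g₀ := by
      have hexp : (a + b) • (x' + σ x')
          = (a • x' + b • σ x') + (a • σ x' + b • x') := by
        rw [add_smul, smul_add, smul_add]; abel
      rw [← hsum, hexp, hab, hab', ← smul_add]
    have hminus : k • (y - σ y) = (a - b) • h₀ := by
      have hexp : (a - b) • (x' - σ x')
          = (a • x' + b • σ x') - (a • σ x' + b • x') := by
        rw [sub_smul, smul_sub, smul_sub]; abel
      rw [← hdiff, hexp, hab, hab', ← smul_sub]
    obtain ⟨p, hp1, hp2⟩ := prim_div hgp hk hplus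
    obtain ⟨q, hq1, hq2⟩ := prim_div hhp hk hminus
    have h2y : (2:ℤ) • y = p • g₀ + q • h₀ := by
      have : (2:ℤ) • y = (y + σ y) + (y - σ y) := by rw [two_smul]; abel
      rw [this, hp2, hq2]
    have h2y' : (2:ℤ) • y = (p + q) • x' + (p - q) • σ x' := by
      rw [h2y, ← hsum, ← hdiff, smul_add, smul_sub, add_smul, sub_smul]; abel
    by_cases hpar : 2 ∣ p + q
    · have hpar2 : 2 ∣ p - q := by omega
      refine (hSmem y).mpr ⟨(p + q)/2, (p - q)/2, ?_⟩
      apply cancel2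
      rw [smul_add, smul_smul, smul_smul, Int.mul_ediv_cancel' hpar,
        Int.mul_ediv_cancel' hpar2, ← h2y']
    · exfalso
      by_cases hp2' : (2:ℤ) ∣ p
      · have hq0 : ¬ (2:ℤ) ∣ q := by omega
        have hqh : q • h₀ = (2:ℤ) • (y - (p/2) • g₀) := by
          rw [smul_sub, smul_smul, Int.mul_ediv_cancel' hp2', h2y]; abel
        have hfin : (2:ℤ) • ((y - (p/2) • g₀) + ((1 - q)/2) • h₀) = h₀ := by
          rw [smul_add, ← hqh, smul_smul, Int.mul_ediv_cancel' (by omega : (2:ℤ) ∣ 1 - q),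
            ← add_smul]
          norm_num
        exact hnu2 (hhp 2 _ hfin)
      · have hq2' : (2:ℤ) ∣ q := by omega
        have hph : p • g₀ = (2:ℤ) • (y - (q/2) • h₀) := by
          rw [smul_sub, smul_smul, Int.mul_ediv_cancel' hq2', h2y]; abel
        have hfin : (2:ℤ) • ((y - (q/2) • h₀) + ((1 - p)/2) • g₀) = g₀ := by
          rw [smul_add, ← hph, smul_smul, Int.mul_ediv_cancel' (by omega : (2:ℤ) ∣ 1 - p),
            ← add_smul]
          norm_num
        exact hnu2 (hgp 2 _ hfin)
  -- the quotient is torsion-free, hence free, hence projective; get a projection onto S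
  haveI : NoZeroSMulDivisors ℤ (L ⧸ S) := by
    refine ⟨fun {c w} hcw => ?_⟩
    by_cases hc : c = 0
    · exact Or.inl hc
    · right
      obtain ⟨y, rfl⟩ := S.mkQ_surjective w
      rw [← map_smul] at hcw
      have hmem : c • y ∈ S := by
        rw [← Submodule.ker_mkQ S, LinearMap.mem_ker]
        exact hcw
      have hyS := hsat c y hc hmem
      show S.mkQ y = 0
      rw [← LinearMap.mem_ker, Submodule.ker_mkQ]
      exact hyS
  obtain ⟨ρ, hρ⟩ := Module.projective_lifting_property S.mkQ LinearMap.id S.mkQ_surjective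
  set π₁ : L →ₗ[ℤ] L := LinearMap.id - ρ ∘ₗ S.mkQ with hπ₁def
  have hπ₁mem : ∀ z : L, π₁ z ∈ S := by
    intro z
    have h0 : S.mkQ (π₁ z) = 0 := by
      rw [hπ₁def]
      simp only [LinearMap.sub_apply, LinearMap.id_apply, LinearMap.coe_comp,
        Function.comp_apply, map_sub]
      have := LinearMap.congr_fun hρ (S.mkQ z)
      simp only [LinearMap.coe_comp, Function.comp_apply, LinearMap.id_apply] at this
      rw [this, sub_self]
    rwa [← LinearMap.mem_ker, Submodule.ker_mkQ] at h0
  have hπ₁fix : ∀ z ∈ S, π₁ z = z := by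
    intro z hz
    have h0 : S.mkQ z = 0 := by
      rw [← LinearMap.mem_ker, Submodule.ker_mkQ]
      exact hz
    rw [hπ₁def]
    simp only [LinearMap.sub_apply, LinearMap.id_apply, LinearMap.coe_comp, Function.comp_apply]
    rw [h0, map_zero, sub_zero]
  set B : Basis Bool ℤ S := Basis.span hli with hBdef
  have hBf : (B false : L) = x' := congrArg Subtype.val (Basis.span_apply hli false)
  have hBt : (B true : L) = σ x' := congrArg Subtype.val (Basis.span_apply hli true)
  set φ : L →ₗ[ℤ] ℤ := B.coord false ∘ₗ (π₁.codRestrict S hπ₁mem) with hφdef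
  have hcodf : (π₁.codRestrict S hπ₁mem) x' = B false := by
    apply Subtype.ext
    rw [LinearMap.codRestrict_apply, hBf]
    exact hπ₁fix x' hx'S
  have hcodt : (π₁.codRestrict S hπ₁mem) (σ x') = B true := by
    apply Subtype.ext
    rw [LinearMap.codRestrict_apply, hBt]
    exact hπ₁fix (σ x') hσx'S
  have hφ1 : φ x' = 1 := by
    rw [hφdef, LinearMap.coe_comp, Function.comp_apply, hcodf, Basis.coord_apply,
      Basis.repr_self, Finsupp.single_eq_same]
  have hφ2 : φ (σ x') = 0 := by
    rw [hφdef, LinearMap.coe_comp, Function.comp_apply, hcodt, Basis.coord_apply,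
      Basis.repr_self]
    simp
  set π : L →ₗ[ℤ] L :=
    (LinearMap.toSpanSingleton ℤ L x') ∘ₗ φ
      + (LinearMap.toSpanSingleton ℤ L (σ x')) ∘ₗ (φ ∘ₗ σ) with hπdef
  have hπapp : ∀ z : L, π z = φ z • x' + φ (σ z) • σ x' := by
    intro z
    rw [hπdef]
    simp [LinearMap.toSpanSingleton_apply]
  have hπx' : π x' = x' := by rw [hπapp, hφ1, hφ2, one_smul, zero_smul, add_zero]
  have hπσx' : π (σ x') = σ x' := by rw [hπapp, hσ, hφ1, hφ2, zero_smul, one_smul, zero_add]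
  have hπS : ∀ z : L, π z ∈ S := fun z =>
    Submodule.add_mem _ (Submodule.smul_mem _ _ hx'S) (Submodule.smul_mem _ _ hσx'S)
  set π' : L →ₗ[ℤ] S := π.codRestrict S hπS with hπ'def
  have hπfixS : ∀ z ∈ S, π z = z := by
    intro z hz
    induction hz using Submodule.span_induction with
    | mem w hw =>
      obtain ⟨i, rfl⟩ := hw
      cases i
      · exact hπx'
      · exact hπσx'
    | zero => exact map_zero π
    | add a b _ _ ha hb => rw [map_add, ha, hb]
    | smul c a _ ha => rw [map_smul, ha]
  have hπ'fix : ∀ s : S, π' s = s := by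
    intro s
    apply Subtype.ext
    rw [hπ'def, LinearMap.codRestrict_apply]
    exact hπfixS (s : L) s.2
  have hcompl : IsCompl S (LinearMap.ker π') := LinearMap.isCompl_of_proj hπ'fix
  set T : Submodule ℤ L := LinearMap.ker π' with hTdef
  have hkermem : ∀ z : L, z ∈ T ↔ π z = 0 := by
    intro z
    rw [hTdef, LinearMap.mem_ker]
    constructor
    · intro h'
      have := congrArg (Subtype.val) h'
      rwa [hπ'def, LinearMap.codRestrict_apply] at this
    · intro h'
      apply Subtype.ext
      rw [hπ'def, LinearMap.codRestrict_apply, h']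
      rfl
  have hπσ : ∀ z : L, π (σ z) = σ (π z) := by
    intro z
    rw [hπapp, hπapp, hσ, map_add, map_smul, map_smul, hσ]
    abel
  have hTinv : ∀ z ∈ T, σ z ∈ T := by
    intro z hz
    rw [hkermem] at hz ⊢
    rw [hπσ, hz, map_zero]
  -- basis swap conditions
  have hb0 : σ.restrict hSinv (B false) = B true := by
    apply Subtype.ext
    rw [LinearMap.restrict_apply]
    show σ (B false : L) = (B true : L)
    rw [hBf, hBt]
  have hb1 : σ.restrict hSinv (B true) = B false := by
    apply Subtype.ext
    rw [LinearMap.restrict_apply]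
    show σ (B true : L) = (B false : L)
    rw [hBf, hBt, hσ]
  -- rank bookkeeping
  haveI : Module.Free ℤ S := Module.Free.of_basis B
  haveI : Module.Finite ℤ S := Module.Finite.of_basis B
  have hrank : Module.finrank ℤ S + Module.finrank ℤ T = Module.finrank ℤ L := by
    have heq := LinearEquiv.finrank_eq (Submodule.prodEquivOfIsCompl S T hcompl)
    rw [Module.finrank_prod] at heq
    exact heq
  have hS2 : Module.finrank ℤ S = 2 := by
    rw [Module.finrank_eq_card_basis B]
    simp
  exact ⟨S, T, hcompl, hSinv, hTinv, B, hb0, hb1, by omega⟩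

end Peel
section Main

universe u

theorem gsol_main : ∀ (n : ℕ) {L : Type u} [AddCommGroup L]
    [Module.Free ℤ L] [Module.Finite ℤ L] (σ : L →ₗ[ℤ] L),
    (∀ x, σ (σ x) = x) → Module.finrank ℤ L ≤ n → GSol L σ := by
  intro n
  induction n using Nat.strong_induction_on with
  | _ n IH =>
  intro L _ _ _ σ hσ hrk
  haveI : IsNoetherian ℤ L := isNoetherian_of_isNoetherianRing_of_finite ℤ L
  by_cases hsplit : ∀ x : L, ∃ u v : L, σ u = u ∧ σ v = -v ∧ x = u + v
  · set S := LinearMap.ker (σ - LinearMap.id) with hS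
    set T := LinearMap.ker (σ + LinearMap.id) with hT
    have hmemS : ∀ z : L, z ∈ S ↔ σ z = z := fun z => by
      rw [hS, LinearMap.mem_ker, LinearMap.sub_apply, LinearMap.id_apply, sub_eq_zero]
    have hmemT : ∀ z : L, z ∈ T ↔ σ z = -z := fun z => by
      rw [hT, LinearMap.mem_ker, LinearMap.add_apply, LinearMap.id_apply,
        add_eq_zero_iff_eq_neg]
    have hSinv : ∀ z ∈ S, σ z ∈ S := by
      intro z hz
      rw [hmemS] at hz ⊢
      rw [hz]
      exact hz
    have hTinv : ∀ z ∈ T, σ z ∈ T := by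
      intro z hz
      rw [hmemT] at hz ⊢
      rw [hσ, hz, neg_neg]
    have hdisj : Disjoint S T := by
      rw [disjoint_iff, Submodule.eq_bot_iff]
      intro z hz
      obtain ⟨hz1, hz2⟩ := Submodule.mem_inf.mp hz
      rw [hmemS] at hz1
      rw [hmemT] at hz2
      have hzz : z = -z := hz1.symm.trans hz2
      have h2 : (2:ℤ) • z = 0 := by
        rw [two_smul]
        exact add_eq_zero_iff_eq_neg.mpr hzz
      rcases smul_eq_zero.mp h2 with h' | h'
      · exact absurd h' two_ne_zero
      · exact h'
    have hcodis : Codisjoint S T := by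
      rw [codisjoint_iff, Submodule.eq_top_iff']
      intro z
      obtain ⟨u, v, hu, hv, rfl⟩ := hsplit z
      exact Submodule.mem_sup.mpr ⟨u, (hmemS u).mpr hu, v, (hmemT v).mpr hv, rfl⟩
    have hcompl : IsCompl S T := ⟨hdisj, hcodis⟩
    haveI : Module.Finite ℤ S := Module.Finite.iff_fg.mpr (IsNoetherian.noetherian S)
    haveI : Module.Finite ℤ T := Module.Finite.iff_fg.mpr (IsNoetherian.noetherian T)
    apply gsol_combine σ S T hcompl hSinv hTinv
    · apply gsol_of_id
      intro s
      apply Subtype.ext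
      show σ (s : L) = (s : L)
      exact (hmemS _).mp s.2
    · apply gsol_of_neg
      intro t
      apply Subtype.ext
      show σ (t : L) = -(t : L)
      exact (hmemT _).mp t.2
  · push_neg at hsplit
    obtain ⟨x, hx⟩ := hsplit
    obtain ⟨S, T, hcompl, hSinv, hTinv, B, hb0, hb1, hrk2⟩ := gsol_peel σ hσ x hx
    haveI : Module.Finite ℤ T := Module.Finite.iff_fg.mpr (IsNoetherian.noetherian T)
    apply gsol_combine σ S T hcompl hSinv hTinv
    · exact gsol_swap B _ hb0 hb1
    · refine IH (Module.finrank ℤ T) (by omega) (σ.restrict hTinv) ?_ le_rfl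
      intro t
      apply Subtype.ext
      show σ (σ (t : L)) = (t : L)
      exact hσ _

end Main

/-- Let `Λ` be a finitely generated free abelian group with an additive
involution `σ`, and let `Λ* = Hom_ℤ(Λ, ℤ)` carry the induced involution
`(σ·f)(x) = f(σx)`. Then `Λ*` is isomorphic to `Λ` as a `G`-module: there is a group
isomorphism `e : Λ ≃ Λ*` commuting with the involutions, i.e.
`e(σ x) = (e x) ∘ σ` for all `x`. -/
theorem dual_isomorphic_as_G_module
    {Λ : Type*} [AddCommGroup Λ] [Module.Free ℤ Λ] [Module.Finite ℤ Λ]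
    (σ : AddMonoid.End Λ) (hσ : σ * σ = 1) :
    ∃ e : Λ ≃+ (Λ →+ ℤ), ∀ x y : Λ, e (σ x) y = e x (σ y) := by
  have hσl : ∀ x : Λ, σ.toIntLinearMap (σ.toIntLinearMap x) = x := by
    intro x
    have := DFunLike.congr_fun hσ x
    show σ (σ x) = x
    simpa using this
  obtain ⟨e, he⟩ := gsol_main (Module.finrank ℤ Λ) σ.toIntLinearMap hσl le_rfl
  refine ⟨{ toFun := fun z => (e z).toAddMonoidHom,
            invFun := fun f => e.symm f.toIntLinearMap,
            left_inv := ?_, right_inv := ?_, map_add' := ?_}, ?_⟩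
  · intro z
    have h1 : (e z).toAddMonoidHom.toIntLinearMap = e z := by ext w; rfl
    show e.symm (e z).toAddMonoidHom.toIntLinearMap = z
    rw [h1, e.symm_apply_apply]
  · intro f
    apply AddMonoidHom.ext
    intro w
    show (e (e.symm f.toIntLinearMap)).toAddMonoidHom w = f w
    rw [e.apply_symm_apply]
    rfl
  · intro a b
    apply AddMonoidHom.ext
    intro w
    show (e (a + b)) w = (e a) w + (e b) w
    rw [map_add]
    rfl
  · intro x y
    exact he x y
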